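/- Let T be a (p,q)-banded matrix with nonvanishing extreme diagonals, with left recursion polynomials A^{(a)}_n, right recursion polynomials B^{(b)}_n, and determinantal polynomials Q_{n,N}, R_{n,N}. Fix N ∈ ℕ and let λ ∈ ℝ be a root of the characteristic polynomial P_{N+1}. Then the row vector v ∈ ℝ^{N+1} with entries v_n = Q_{n,N}(λ) (0 ≤ n ≤ N) satisfies v · T^{[N]} = λ · v, and the column vector u ∈ ℝ^{N+1} with entries u_n = R_{n,N}(λ) satisfies T^{[N]} · u = λ · u. -/

import Mathlib

open Polynomial Matrix Finset

lemma banded_aux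
    (p q : ℕ) (hp : 1 ≤ p)
    (T : ℕ → ℕ → ℝ)
    (hband : ∀ i j, (j + p < i ∨ i + q < j) → T i j = 0)
    (hext : ∀ n, T (n + p) n ≠ 0)
    (A : ℕ → ℕ → Polynomial ℝ)
    (hA0 : ∀ a, 1 ≤ a → a ≤ p → ∀ n, n < a - 1 → A a n = 0)
    (hA1 : ∀ a, 1 ≤ a → a ≤ p → A a (a - 1) = 1)
    (hArec : ∀ a, 1 ≤ a → a ≤ p → ∀ n,
      ∑ m ∈ Finset.Icc (n - q) (n + p), A a m * Polynomial.C (T m n)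
        = Polynomial.X * A a n)
    (Q : ℕ → ℕ → Polynomial ℝ)
    (hQ : ∀ n N, Q n N = (Matrix.of fun i a : Fin p =>
        if (i : ℕ) = 0 then A ((a : ℕ) + 1) n else A ((a : ℕ) + 1) (N + (i : ℕ))).det)
    (N : ℕ) (lam : ℝ)
    (v : Fin (N + 1) → ℝ) (hv : v ≠ 0)
    (heig : ∀ n : Fin (N + 1), ∑ m : Fin (N + 1), v m * T m n = lam * v n) :
    ∀ n : Fin (N + 1), ∑ m : Fin (N + 1), (Q (m : ℕ) N).eval lam * T m n
      = lam * (Q (n : ℕ) N).eval lam := by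
  have ha1 : ∀ a : Fin p, 1 ≤ (a : ℕ) + 1 := fun a => Nat.succ_le_succ (Nat.zero_le _)
  have hap : ∀ a : Fin p, (a : ℕ) + 1 ≤ p := fun a => a.isLt
  set i0 : Fin p := ⟨0, hp⟩ with hi0
  set M0 : Matrix (Fin p) (Fin p) ℝ[X] :=
    Matrix.of (fun i a : Fin p => if (i : ℕ) = 0 then 0 else A ((a : ℕ) + 1) (N + (i : ℕ)))
    with hM0
  set r : ℕ → Fin p → ℝ[X] := fun m a => A ((a : ℕ) + 1) m with hr
  have hQ' : ∀ m, Q m N = (M0.updateRow i0 (r m)).det := by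
    intro m
    rw [hQ]
    congr 1
    ext i a
    by_cases h : i = i0
    · subst h
      simp [Matrix.updateRow_self, M0, r, i0]
    · have h0 : (i : ℕ) ≠ 0 := fun hc => h (Fin.ext hc)
      rw [Matrix.updateRow_ne h]
      simp [M0, h0]
  have hdetsum : ∀ (s : Finset ℕ) (w : ℕ → Fin p → ℝ[X]),
      (M0.updateRow i0 (∑ m ∈ s, w m)).det = ∑ m ∈ s, (M0.updateRow i0 (w m)).det := by
    intro s w
    induction s using Finset.induction_on with
    | empty =>
        simp only [Finset.sum_empty]
        exact Matrix.det_eq_zero_of_row_eq_zero i0 (fun j => by simp [Matrix.updateRow_self])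
    | @insert _ _ h ih =>
        rw [Finset.sum_insert h, Matrix.det_updateRow_add, ih, Finset.sum_insert h]
  -- Step A : polynomial recursion for Q
  have hQrec : ∀ n : ℕ, ∑ m ∈ Finset.Icc (n - q) (n + p), Q m N * Polynomial.C (T m n)
      = Polynomial.X * Q n N := by
    intro n
    have h1 : ∀ m, Q m N * Polynomial.C (T m n)
        = (M0.updateRow i0 (Polynomial.C (T m n) • r m)).det := by
      intro m
      rw [Matrix.det_updateRow_smul, ← hQ' m, mul_comm]
    calc ∑ m ∈ Finset.Icc (n - q) (n + p), Q m N * Polynomial.C (T m n)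
        = ∑ m ∈ Finset.Icc (n - q) (n + p),
            (M0.updateRow i0 (Polynomial.C (T m n) • r m)).det := by
          exact Finset.sum_congr rfl fun m _ => h1 m
      _ = (M0.updateRow i0 (∑ m ∈ Finset.Icc (n - q) (n + p),
            Polynomial.C (T m n) • r m)).det := (hdetsum _ _).symm
      _ = (M0.updateRow i0 (Polynomial.X • r n)).det := by
          have hsum : (∑ m ∈ Finset.Icc (n - q) (n + p), (Polynomial.C (T m n) : ℝ[X]) • r m)
              = (Polynomial.X : ℝ[X]) • r n := by
            funext a
            simp only [Finset.sum_apply, Pi.smul_apply, smul_eq_mul]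
            rw [← hArec ((a : ℕ) + 1) (ha1 a) (hap a) n]
            exact Finset.sum_congr rfl fun m _ => mul_comm _ _
          rw [hsum]
      _ = Polynomial.X * Q n N := by
          rw [Matrix.det_updateRow_smul M0 i0 (Polynomial.X : ℝ[X]) (r n), ← hQ' n]
  -- Step B : vanishing of the middle Q's
  have hQmid : ∀ j, 1 ≤ j → j < p → Q (N + j) N = 0 := by
    intro j hj1 hjp
    rw [hQ]
    apply Matrix.det_zero_of_row_eq (i := i0) (j := ⟨j, hjp⟩)
    · intro h
      have := congrArg Fin.val h
      simp [i0] at this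
      omega
    · funext a
      have hj0 : j ≠ 0 := by omega
      simp [i0, hj0]
  -- conversion between Icc sums and range sums
  have hconv : ∀ (φ : ℕ → ℝ), (∀ m, N + 1 ≤ m → m ≤ N + p → φ m = 0) → ∀ n : ℕ, n ≤ N →
      ∑ m ∈ Finset.Icc (n - q) (n + p), φ m * T m n
        = ∑ m ∈ Finset.range (N + 1), φ m * T m n := by
    intro φ hφ n hn
    have h1 : ∑ m ∈ Finset.Icc (n - q) (n + p), φ m * T m n
        = ∑ m ∈ Finset.range (N + 1 + p), φ m * T m n := by
      apply Finset.sum_subset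
      · intro x hx
        simp only [Finset.mem_Icc] at hx
        simp only [Finset.mem_range]
        omega
      · intro x _ hx
        simp only [Finset.mem_Icc, not_and_or, not_le] at hx
        rcases hx with hx | hx
        · have : x + q < n := by omega
          rw [hband x n (Or.inr this), mul_zero]
        · rw [hband x n (Or.inl (by omega)), mul_zero]
    have h2 : ∑ m ∈ Finset.range (N + 1), φ m * T m n
        = ∑ m ∈ Finset.range (N + 1 + p), φ m * T m n := by
      apply Finset.sum_subset
      · intro x hx
        simp only [Finset.mem_range] at hx ⊢
        omega
      · intro x hx hx'
        simp only [Finset.mem_range, not_lt] at hx hx'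
        rw [hφ x hx' (by omega), zero_mul]
    rw [h1, ← h2]
  -- Step C : (Q (N+p) N).eval lam = 0
  have hQtop : (Q (N + p) N).eval lam = 0 := by
    set f : ℕ → ℝ := fun m => if h : m < N + 1 then v ⟨m, h⟩ else 0 with hf
    have hfrec : ∀ n : ℕ, n ≤ N →
        ∑ m ∈ Finset.Icc (n - q) (n + p), f m * T m n = lam * f n := by
      intro n hn
      rw [hconv f (fun m h1 _ => dif_neg (by omega)) n hn]
      have he := heig ⟨n, by omega⟩
      have hr1 : ∑ m ∈ Finset.range (N + 1), f m * T m n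
          = ∑ m : Fin (N + 1), v m * T (m : ℕ) n := by
        rw [← Fin.sum_univ_eq_sum_range (fun k => f k * T k n)]
        exact Finset.sum_congr rfl fun m _ => by
          simp [f, m.isLt]
          exact fun h => absurd h (not_lt.mpr (Nat.lt_succ_iff.mp m.isLt))
      rw [hr1, he]
      congr 1
      simp [f, Nat.lt_succ_of_le hn]
      exact fun h => absurd h (not_lt.mpr hn)
    set U : Matrix (Fin p) (Fin p) ℝ :=
      Matrix.of (fun j a : Fin p => (A ((a : ℕ) + 1) (j : ℕ)).eval lam) with hU
    have hUtri : U.BlockTriangular OrderDual.toDual := by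
      intro i j hij
      have : (i : ℕ) < j := hij
      have h0 : A ((j : ℕ) + 1) (i : ℕ) = 0 := hA0 _ (ha1 j) (hap j) _ (by omega)
      simp [U, h0]
    have hUdet : U.det = 1 := by
      rw [Matrix.det_of_lowerTriangular U hUtri]
      apply Finset.prod_eq_one
      intro a _
      have := hA1 ((a : ℕ) + 1) (ha1 a) (hap a)
      simp only [Nat.add_sub_cancel] at this
      simp [U, this]
    have hUunit : IsUnit U.det := by rw [hUdet]; exact isUnit_one
    set c : Fin p → ℝ := U⁻¹ *ᵥ (fun j : Fin p => f (j : ℕ)) with hc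
    have hUc : U *ᵥ c = fun j : Fin p => f (j : ℕ) := by
      rw [hc, Matrix.mulVec_mulVec, Matrix.mul_nonsing_inv U hUunit, Matrix.one_mulVec]
    set g : ℕ → ℝ := fun m => f m - ∑ a : Fin p, c a * (A ((a : ℕ) + 1) m).eval lam with hg
    have hg0 : ∀ j : ℕ, j < p → g j = 0 := by
      intro j hj
      have := congrFun hUc ⟨j, hj⟩
      simp only [Matrix.mulVec, dotProduct] at this
      have h2 : ∑ a : Fin p, c a * (A ((a : ℕ) + 1) j).eval lam = f j := by
        rw [← this]
        exact Finset.sum_congr rfl fun a _ => by simp [U, mul_comm]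
      simp [g, h2]
    have hArecEval : ∀ (a : Fin p) (n : ℕ),
        ∑ m ∈ Finset.Icc (n - q) (n + p), (A ((a : ℕ) + 1) m).eval lam * T m n
          = lam * (A ((a : ℕ) + 1) n).eval lam := by
      intro a n
      have := congrArg (Polynomial.eval lam) (hArec ((a : ℕ) + 1) (ha1 a) (hap a) n)
      simpa [Polynomial.eval_finset_sum] using this
    have hgrec : ∀ n : ℕ, n ≤ N →
        ∑ m ∈ Finset.Icc (n - q) (n + p), g m * T m n = lam * g n := by
      intro n hn
      simp only [hg, sub_mul, Finset.sum_sub_distrib, mul_sub]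
      rw [hfrec n hn]
      congr 1
      calc ∑ m ∈ Finset.Icc (n - q) (n + p),
            (∑ a : Fin p, c a * (A ((a : ℕ) + 1) m).eval lam) * T m n
          = ∑ a : Fin p, ∑ m ∈ Finset.Icc (n - q) (n + p),
              c a * ((A ((a : ℕ) + 1) m).eval lam * T m n) := by
            rw [Finset.sum_comm]
            exact Finset.sum_congr rfl fun m _ => by
              rw [Finset.sum_mul]
              exact Finset.sum_congr rfl fun a _ => by ring
        _ = ∑ a : Fin p, c a * (lam * (A ((a : ℕ) + 1) n).eval lam) := by
            refine Finset.sum_congr rfl fun a _ => ?_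
            rw [← Finset.mul_sum, hArecEval a n]
        _ = lam * ∑ a : Fin p, c a * (A ((a : ℕ) + 1) n).eval lam := by
            rw [Finset.mul_sum]
            exact Finset.sum_congr rfl fun a _ => by ring
    have hgzero : ∀ k, k ≤ N + p → g k = 0 := by
      intro k
      induction k using Nat.strong_induction_on with
      | _ k ih =>
        intro hk
        by_cases hkp : k < p
        · exact hg0 k hkp
        · push_neg at hkp
          set n := k - p with hn
          have hnN : n ≤ N := by omega
          have hk' : n + p = k := by omega
          have hrec := hgrec n hnN
          have hmem : n + p ∈ Finset.Icc (n - q) (n + p) :=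
            Finset.mem_Icc.2 ⟨by omega, le_refl _⟩
          rw [← Finset.sum_erase_add _ _ hmem] at hrec
          have hzero : ∑ m ∈ (Finset.Icc (n - q) (n + p)).erase (n + p), g m * T m n = 0 := by
            apply Finset.sum_eq_zero
            intro m hm
            have h1 := Finset.mem_of_mem_erase hm
            have h2 := Finset.ne_of_mem_erase hm
            simp only [Finset.mem_Icc] at h1
            rw [ih m (by omega) (by omega), zero_mul]
          rw [hzero, zero_add] at hrec
          have hgn : g n = 0 := ih n (by omega) (by omega)
          rw [hgn, mul_zero] at hrec
          have := mul_eq_zero.mp hrec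
          rcases this with h | h
          · rwa [← hk']
          · exact absurd h (hext n)
    have hcne : c ≠ 0 := by
      intro hc0
      apply hv
      funext i
      have hfi : f (i : ℕ) = 0 := by
        have := hgzero (i : ℕ) (by omega)
        simp only [hg, hc0, Pi.zero_apply, zero_mul, Finset.sum_const_zero, sub_zero] at this
        exact this
      exact (by simpa [f, i.isLt] using hfi : (i : ℕ) ≤ N → v i = 0) (Nat.lt_succ_iff.mp i.isLt)
    have hkey : ∀ j, 1 ≤ j → j ≤ p →
        ∑ a : Fin p, c a * (A ((a : ℕ) + 1) (N + j)).eval lam = 0 := by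
      intro j hj1 hjp
      have h1 : g (N + j) = 0 := hgzero _ (by omega)
      have h2 : f (N + j) = 0 := dif_neg (by omega)
      simp only [hg, h2, zero_sub, neg_eq_zero] at h1
      exact h1
    set W : Matrix (Fin p) (Fin p) ℝ :=
      Matrix.of (fun i a : Fin p =>
        if (i : ℕ) = 0 then (A ((a : ℕ) + 1) (N + p)).eval lam
        else (A ((a : ℕ) + 1) (N + (i : ℕ))).eval lam) with hW
    have hQW : (Q (N + p) N).eval lam = W.det := by
      rw [hQ]
      rw [show (Polynomial.eval lam : ℝ[X] → ℝ) = (Polynomial.evalRingHom lam : ℝ[X] → ℝ) from rfl]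
      rw [RingHom.map_det]
      congr 1
      ext i a
      by_cases h : (i : ℕ) = 0 <;> simp [W, h]
    have hWc : W *ᵥ c = 0 := by
      funext i
      simp only [Matrix.mulVec, dotProduct, Pi.zero_apply]
      by_cases h : (i : ℕ) = 0
      · rw [← hkey p (by omega) (le_refl p)]
        exact Finset.sum_congr rfl fun a _ => by simp [W, h, mul_comm]
      · rw [← hkey (i : ℕ) (by omega) (le_of_lt i.isLt)]
        exact Finset.sum_congr rfl fun a _ => by simp [W, h, mul_comm]
    have hWdet : W.det = 0 :=
      Matrix.exists_mulVec_eq_zero_iff.mp ⟨c, hcne, hWc⟩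
    rw [hQW, hWdet]
  -- Step D : conclusion
  intro n
  have hzero : ∀ m, N + 1 ≤ m → m ≤ N + p → (Q m N).eval lam = 0 := by
    intro m h1 h2
    by_cases hm : m = N + p
    · rw [hm]; exact hQtop
    · have : m = N + (m - N) := by omega
      rw [this, hQmid (m - N) (by omega) (by omega)]
      simp
  have hEval : ∑ m ∈ Finset.Icc ((n : ℕ) - q) ((n : ℕ) + p), (Q m N).eval lam * T m (n : ℕ)
      = lam * (Q (n : ℕ) N).eval lam := by
    have := congrArg (Polynomial.eval lam) (hQrec (n : ℕ))
    simpa [Polynomial.eval_finset_sum] using this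
  rw [hconv (fun m => (Q m N).eval lam) hzero (n : ℕ) (by omega)] at hEval
  rw [← hEval]
  rw [← Fin.sum_univ_eq_sum_range (fun k => (Q k N).eval lam * T k (n : ℕ))]


/-- If `λ` is a root of the characteristic polynomial `P_{N+1}` of the leading principal
submatrix `T^{[N]}` of a `(p,q)`-banded matrix with nonvanishing extreme diagonals, then the
vector of evaluations of the determinantal polynomials `Q_{n,N}` at `λ` is a left eigenvector
of `T^{[N]}`, and the vector of evaluations of `R_{n,N}` at `λ` is a right eigenvector. -/
theorem determinantal_evaluations_are_eigenvectors
    (p q : ℕ) (hp : 1 ≤ p) (hq : 1 ≤ q)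
    (T : ℕ → ℕ → ℝ)
    (hband : ∀ i j, (j + p < i ∨ i + q < j) → T i j = 0)
    (hext : ∀ n, T (n + p) n ≠ 0 ∧ T n (n + q) ≠ 0)
    (ν : ℕ → ℕ → ℝ) (A : ℕ → ℕ → Polynomial ℝ)
    (hA0 : ∀ a, 1 ≤ a → a ≤ p → ∀ n, n < a - 1 → A a n = 0)
    (hA1 : ∀ a, 1 ≤ a → a ≤ p → A a (a - 1) = 1)
    (hAconst : ∀ a, 1 ≤ a → a ≤ p → ∀ j, a ≤ j → j ≤ p - 1 → A a j = Polynomial.C (ν a j))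
    (hArec : ∀ a, 1 ≤ a → a ≤ p → ∀ n,
      ∑ m ∈ Finset.Icc (n - q) (n + p), A a m * Polynomial.C (T m n)
        = Polynomial.X * A a n)
    (ξ : ℕ → ℕ → ℝ) (B : ℕ → ℕ → Polynomial ℝ)
    (hB0 : ∀ b, 1 ≤ b → b ≤ q → ∀ n, n < b - 1 → B b n = 0)
    (hB1 : ∀ b, 1 ≤ b → b ≤ q → B b (b - 1) = 1)
    (hBconst : ∀ b, 1 ≤ b → b ≤ q → ∀ j, b ≤ j → j ≤ q - 1 → B b j = Polynomial.C (ξ b j))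
    (hBrec : ∀ b, 1 ≤ b → b ≤ q → ∀ n,
      ∑ m ∈ Finset.Icc (n - p) (n + q), Polynomial.C (T n m) * B b m
        = Polynomial.X * B b n)
    (P : ℕ → Polynomial ℝ)
    (hP0 : P 0 = 1)
    (hPsucc : ∀ N, P (N + 1) = (Matrix.of fun i j : Fin (N + 1) => T i j).charpoly)
    (Q : ℕ → ℕ → Polynomial ℝ)
    (hQ : ∀ n N, Q n N = (Matrix.of fun i a : Fin p =>
        if (i : ℕ) = 0 then A ((a : ℕ) + 1) n else A ((a : ℕ) + 1) (N + (i : ℕ))).det)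
    (R : ℕ → ℕ → Polynomial ℝ)
    (hR : ∀ n N, R n N = (Matrix.of fun i b : Fin q =>
        if (i : ℕ) = 0 then B ((b : ℕ) + 1) n else B ((b : ℕ) + 1) (N + (i : ℕ))).det)
    (N : ℕ) (lam : ℝ) (hroot : (P (N + 1)).eval lam = 0) :
    Matrix.vecMul (fun n : Fin (N + 1) => (Q (n : ℕ) N).eval lam)
        (Matrix.of fun i j : Fin (N + 1) => T i j)
      = lam • (fun n : Fin (N + 1) => (Q (n : ℕ) N).eval lam) ∧
    Matrix.mulVec (Matrix.of fun i j : Fin (N + 1) => T i j)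
        (fun n : Fin (N + 1) => (R (n : ℕ) N).eval lam)
      = lam • (fun n : Fin (N + 1) => (R (n : ℕ) N).eval lam) := by
  classical
  set M : Matrix (Fin (N + 1)) (Fin (N + 1)) ℝ := Matrix.of (fun i j : Fin (N + 1) => T i j)
    with hM
  set E : Matrix (Fin (N + 1)) (Fin (N + 1)) ℝ := (charmatrix M).map (Polynomial.evalRingHom lam)
    with hE
  have hEdet : E.det = 0 := by
    rw [hE, ← RingHom.mapMatrix_apply, ← RingHom.map_det]
    rw [hPsucc N] at hroot
    simpa [Matrix.charpoly] using hroot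
  have hEapp : ∀ i j, E i j = (if i = j then lam else 0) - T i j := by
    intro i j
    by_cases h : i = j
    · subst h
      simp [hE, Matrix.map_apply, charmatrix_apply_eq, hM]
    · simp [hE, Matrix.map_apply, charmatrix_apply_ne M _ _ h, h, hM]
  -- right eigenvector
  obtain ⟨u, hu0, huE⟩ := Matrix.exists_mulVec_eq_zero_iff.mpr hEdet
  have heigR : ∀ n : Fin (N + 1), ∑ m : Fin (N + 1), u m * T (n : ℕ) (m : ℕ) = lam * u n := by
    intro n
    have := congrFun huE n
    simp only [Matrix.mulVec, dotProduct, Pi.zero_apply] at this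
    have h1 : ∑ m : Fin (N + 1), E n m * u m
        = lam * u n - ∑ m : Fin (N + 1), u m * T (n : ℕ) (m : ℕ) := by
      rw [Finset.sum_congr rfl (fun m _ => by rw [hEapp n m, sub_mul])]
      rw [Finset.sum_sub_distrib]
      congr 1
      · simp [ite_mul]
      · exact Finset.sum_congr rfl fun m _ => mul_comm _ _
    rw [h1] at this
    linarith
  -- left eigenvector
  have hEtdet : Eᵀ.det = 0 := by rw [Matrix.det_transpose]; exact hEdet
  obtain ⟨v, hv0, hvE⟩ := Matrix.exists_mulVec_eq_zero_iff.mpr hEtdet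
  have heigL : ∀ n : Fin (N + 1), ∑ m : Fin (N + 1), v m * T (m : ℕ) (n : ℕ) = lam * v n := by
    intro n
    have := congrFun hvE n
    simp only [Matrix.mulVec, dotProduct, Matrix.transpose_apply, Pi.zero_apply] at this
    have h1 : ∑ m : Fin (N + 1), E m n * v m
        = lam * v n - ∑ m : Fin (N + 1), v m * T (m : ℕ) (n : ℕ) := by
      rw [Finset.sum_congr rfl (fun m _ => by rw [hEapp m n, sub_mul])]
      rw [Finset.sum_sub_distrib]
      congr 1
      · simp [ite_mul, eq_comm]
      · exact Finset.sum_congr rfl fun m _ => mul_comm _ _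
    rw [h1] at this
    linarith
  have hQside := banded_aux p q hp T hband (fun n => (hext n).1) A hA0 hA1 hArec Q hQ
    N lam v hv0 heigL
  have hband' : ∀ i j, (j + q < i ∨ i + p < j) → T j i = 0 := by
    intro i j h
    exact hband j i h.symm
  have hBrec' : ∀ b, 1 ≤ b → b ≤ q → ∀ n,
      ∑ m ∈ Finset.Icc (n - p) (n + q), B b m * Polynomial.C (T n m)
        = Polynomial.X * B b n := by
    intro b h1 h2 n
    rw [← hBrec b h1 h2 n]
    exact Finset.sum_congr rfl fun m _ => mul_comm _ _
  have hRside := banded_aux q p hq (fun i j => T j i) hband' (fun n => (hext n).2) B hB0 hB1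
    hBrec' R hR N lam u hu0 heigR
  constructor
  · funext n
    have := hQside n
    simpa [Matrix.vecMul, dotProduct, hM] using this
  · funext n
    have := hRside n
    have h2 : ∑ m : Fin (N + 1), T (n : ℕ) (m : ℕ) * (R (m : ℕ) N).eval lam
        = lam * (R (n : ℕ) N).eval lam := by
      rw [← this]
      exact Finset.sum_congr rfl fun m _ => mul_comm _ _
    simpa [Matrix.mulVec, dotProduct, hM] using h2
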